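/- Let S be an ordered forest, I a finite linear order, and p : A ⊕ (Q × I) → A ⊕ Q a function with property (*), where Q = Q(S,I) = {(s,u) ∈ S × I^{<ht(S)} : ht(s) = |u|+1}. Call (s,t) ∈ S ⊗ I very good if for all s' ⊑_S s and initial segments t' of t of corresponding length, (s',t') is the ≤-smallest element z of I(s', t'↾(ht(s')−1)) with p(z) = (s', t'↾(ht(s')−1)). Then for each s ∈ S there is exactly one sequence t (denoted t_s) such that (s, t_s) is very good, and for s₁ ⊑_S s₂ one has t_{s₁} = t_{s₂}↾ht(s₁). -/

import Mathlib

/-- An ordered forest: a finite poset (`tle`, the forest order `⊑`) with linearly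
ordered predecessor sets, together with a linear order `lin` (the lexicographic
order `≤`) extending the forest order and coherent with the forest structure. -/
structure OForest (α : Type) [Finite α] where
  tle : α → α → Prop
  tle_refl : ∀ v, tle v v
  tle_trans : ∀ u v w, tle u v → tle v w → tle u w
  tle_antisymm : ∀ v w, tle v w → tle w v → v = w
  pred_chain : ∀ v x y, tle x v → tle y v → tle x y ∨ tle y x
  lin : α → α → Prop
  lin_refl : ∀ v, lin v v
  lin_trans : ∀ u v w, lin u v → lin v w → lin u w
  lin_antisymm : ∀ v w, lin v w → lin w v → v = w
  lin_total : ∀ v w, lin v w ∨ lin w v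
  tle_lin : ∀ v w, tle v w → lin v w
  lex_coh : ∀ v w v' w', tle v v' → tle w w' → ¬ tle v w → ¬ tle w v → (lin v' w' ↔ lin v w)

variable {α : Type} [Finite α]

/-- The height `ht(s)`: the number of `⊑`-predecessors of `s` (including `s`). -/
noncomputable def htF (S : OForest α) (s : α) : ℕ := Nat.card {x // S.tle x s}

/-- The carrier of `S ⊗ I`: pairs `(s, t)` with `t` a sequence from `I` of length `ht(s)`. -/
def TCar (S : OForest α) (I : Type) : Type := Σ s : α, Fin (htF S s) → I

instance {S : OForest α} {I : Type} [Finite I] : Finite (TCar S I) := by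
  unfold TCar; infer_instance

/-- The carrier of `Q = Q(S, I)`: pairs `(s, u)` with `|u| = ht(s) − 1`. -/
def QCar (S : OForest α) (I : Type) : Type := Σ s : α, Fin (htF S s - 1) → I

/-- Drop the last entry of a sequence of length `ht(s)`. -/
def dropLastF (S : OForest α) {I : Type} {s : α} (t : Fin (htF S s) → I) :
    Fin (htF S s - 1) → I :=
  fun k => t ⟨k.1, Nat.lt_of_lt_of_le k.2 (Nat.sub_le _ _)⟩

/-- The last index of a sequence of length `ht(s)` (heights are positive). -/
noncomputable def lastIx (S : OForest α) (s : α) : Fin (htF S s) :=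
  ⟨htF S s - 1, by
    have h : 0 < htF S s := by
      have : Nonempty {x // S.tle x s} := ⟨⟨s, S.tle_refl s⟩⟩
      exact Nat.card_pos
    omega⟩

/-- The identification `S ⊗ I ≅ Q × I`, `(s, t) ↦ ((s, t ↾ (ht(s)−1)), t(ht(s)−1))`. -/
noncomputable def toQ (S : OForest α) {I : Type} (p : TCar S I) : QCar S I × I :=
  (⟨p.1, dropLastF S p.2⟩, p.2 (lastIx S p.1))

/-- The restriction `t ↾ ht(s')` for `s' ⊑ s`. -/
def restrictT (S : OForest α) {I : Type}
    (hmono : ∀ a b, S.tle a b → htF S a ≤ htF S b) {s s' : α} (h : S.tle s' s)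
    (t : Fin (htF S s) → I) : Fin (htF S s') → I :=
  fun k => t ⟨k.1, Nat.lt_of_lt_of_le k.2 (hmono s' s h)⟩

/-- `(s, t) ∈ S ⊗ I` is very good for `pm`: for every `s' ⊑_S s`, with
`t' = t ↾ ht(s')`, the element `(s', t')` is the `≤`-smallest element `z` of
`I(s', t' ↾ (ht(s')−1))` with `pm z = (s', t' ↾ (ht(s')−1))`. -/
noncomputable def VeryGood (S : OForest α) {I A : Type} [LinearOrder I]
    (hmono : ∀ a b, S.tle a b → htF S a ≤ htF S b)
    (pm : A ⊕ (QCar S I × I) → A ⊕ QCar S I) (q : TCar S I) : Prop :=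
  ∀ (s' : α) (h : S.tle s' q.1),
    pm (Sum.inr (toQ S ⟨s', restrictT S hmono h q.2⟩)) =
      Sum.inr (toQ S ⟨s', restrictT S hmono h q.2⟩).1 ∧
    ∀ i : I, i < (toQ S ⟨s', restrictT S hmono h q.2⟩).2 →
      pm (Sum.inr ((toQ S ⟨s', restrictT S hmono h q.2⟩).1, i)) ≠
        Sum.inr (toQ S ⟨s', restrictT S hmono h q.2⟩).1

lemma htF_pos (S : OForest α) (s : α) : 0 < htF S s := by
  have : Nonempty {x // S.tle x s} := ⟨⟨s, S.tle_refl s⟩⟩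
  exact Nat.card_pos

lemma exists_min {I : Type} [Finite I] [LinearOrder I] {P : I → Prop} (h : ∃ i, P i) :
    ∃ i, P i ∧ ∀ j < i, ¬ P j := by
  obtain ⟨m, hm, hmin⟩ := (Finite.to_wellFoundedLT (α := I)).wf.has_min {i | P i} h
  exact ⟨m, hm, fun j hj hPj => hmin j hPj hj⟩

lemma exists_unique_pred (S : OForest α) (s : α) (k : ℕ) (hk : k < htF S s) :
    ∃! s' : α, S.tle s' s ∧ htF S s' = k + 1 := by
  classical
  set C := {x : α // S.tle x s} with hC
  letI : Fintype C := Fintype.ofFinite C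
  letI : LinearOrder C :=
    { le := fun a b => S.tle a.1 b.1
      le_refl := fun a => S.tle_refl _
      le_trans := fun a b c => S.tle_trans _ _ _
      le_antisymm := fun a b hab hba => Subtype.ext (S.tle_antisymm _ _ hab hba)
      le_total := fun a b => S.pred_chain s a.1 b.1 a.2 b.2
      toDecidableLE := fun _ _ => Classical.dec _ }
  set n := Fintype.card C with hn
  have hns : htF S s = n := Nat.card_eq_fintype_card
  let e : Fin n ≃o C := monoEquivOfFin C rfl
  have key : ∀ x : C, htF S x.1 = (e.symm x).1 + 1 := by
    intro x
    have E1 : {y // S.tle y x.1} ≃ {j : Fin n // j ≤ e.symm x} :=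
      { toFun := fun y => ⟨e.symm ⟨y.1, S.tle_trans _ _ _ y.2 x.2⟩, by
          rw [e.symm.le_iff_le]; exact y.2⟩
        invFun := fun j => ⟨(e j.1).1, by
          have : e j.1 ≤ e (e.symm x) := e.le_iff_le.2 (by simpa using j.2)
          have h2 : e j.1 ≤ x := by simpa using this
          exact h2⟩
        left_inv := fun y => by simp
        right_inv := fun j => by simp }
    have E2 : {j : Fin n // j ≤ e.symm x} ≃ Fin ((e.symm x).1 + 1) :=
      { toFun := fun j => ⟨j.1.1, Nat.lt_succ_of_le j.2⟩
        invFun := fun i => ⟨⟨i.1, lt_of_le_of_lt (Nat.le_of_lt_succ i.2) (e.symm x).2⟩,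
          Fin.mk_le_of_le_val (Nat.le_of_lt_succ i.2)⟩
        left_inv := fun j => by ext; rfl
        right_inv := fun i => rfl }
    calc htF S x.1 = Nat.card {j : Fin n // j ≤ e.symm x} := Nat.card_congr E1
      _ = Nat.card (Fin ((e.symm x).1 + 1)) := Nat.card_congr E2
      _ = (e.symm x).1 + 1 := by simp
  have hk' : k < n := hns ▸ hk
  refine ⟨(e ⟨k, hk'⟩).1, ⟨(e ⟨k, hk'⟩).2, by rw [key]; simp⟩, ?_⟩
  rintro s' ⟨h1, h2⟩
  have := key ⟨s', h1⟩
  rw [h2] at this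
  have hfin : e.symm ⟨s', h1⟩ = ⟨k, hk'⟩ := by
    ext
    simp only [Fin.val_mk]
    omega
  have : (⟨s', h1⟩ : C) = e ⟨k, hk'⟩ := by rw [← hfin, e.apply_symm_apply]
  exact congrArg Subtype.val this

lemma htF_inj (S : OForest α) {a b : α} (h : S.tle a b) (he : htF S a = htF S b) : a = b := by
  have hb : htF S b - 1 < htF S b := by have := htF_pos S b; omega
  obtain ⟨x, hx, hu⟩ := exists_unique_pred S b (htF S b - 1) hb
  have h1 : a = x := hu a ⟨h, by have := htF_pos S b; omega⟩
  have h2 : b = x := hu b ⟨S.tle_refl b, by have := htF_pos S b; omega⟩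
  rw [h1, h2]

lemma vg_uniq (S : OForest α) {I A : Type} [Finite I] [LinearOrder I]
    (hmono : ∀ a b, S.tle a b → htF S a ≤ htF S b)
    (pm : A ⊕ (QCar S I × I) → A ⊕ QCar S I) {s : α} {t₁ t₂ : Fin (htF S s) → I}
    (h₁ : VeryGood S hmono pm ⟨s, t₁⟩) (h₂ : VeryGood S hmono pm ⟨s, t₂⟩) : t₁ = t₂ := by
  have main : ∀ m : ℕ, ∀ k : Fin (htF S s), k.1 = m → t₁ k = t₂ k := by
    intro m
    induction m using Nat.strong_induction_on with
    | _ m ih =>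
      intro k hk
      obtain ⟨s', ⟨hts', hhs'⟩, _⟩ := exists_unique_pred S s k.1 k.2
      obtain ⟨c11, c12⟩ := h₁ s' hts'
      obtain ⟨c21, c22⟩ := h₂ s' hts'
      have hfun : dropLastF S (restrictT S hmono hts' t₁) =
          dropLastF S (restrictT S hmono hts' t₂) := by
        funext j
        have hj : j.1 < m := by have := j.2; omega
        exact ih j.1 (by omega) _ rfl
      have hq : (toQ S ⟨s', restrictT S hmono hts' t₂⟩).1 =
          (toQ S ⟨s', restrictT S hmono hts' t₁⟩).1 :=
        (congrArg (fun f => (⟨s', f⟩ : QCar S I)) hfun).symm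
      have e₁ : (toQ S ⟨s', restrictT S hmono hts' t₁⟩).2 = t₁ k := by
        show t₁ _ = t₁ k
        exact congrArg t₁ (Fin.ext (by show htF S s' - 1 = k.1; omega))
      have e₂ : (toQ S ⟨s', restrictT S hmono hts' t₂⟩).2 = t₂ k := by
        show t₂ _ = t₂ k
        exact congrArg t₂ (Fin.ext (by show htF S s' - 1 = k.1; omega))
      have hp1' : toQ S ⟨s', restrictT S hmono hts' t₁⟩ =
          ((toQ S ⟨s', restrictT S hmono hts' t₁⟩).1, t₁ k) := Prod.ext rfl e₁
      have hp2' : toQ S ⟨s', restrictT S hmono hts' t₂⟩ =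
          ((toQ S ⟨s', restrictT S hmono hts' t₁⟩).1, t₂ k) := Prod.ext hq e₂
      rw [hp1'] at c11
      rw [hp2'] at c21
      rw [e₁] at c12
      rw [e₂, hq] at c22
      rcases lt_trichotomy (t₁ k) (t₂ k) with h | h | h
      · exact absurd c11 (c22 (t₁ k) h)
      · exact h
      · exact absurd c21 (c12 (t₂ k) h)
  funext k
  exact main k.1 k rfl

lemma vg_exists (S : OForest α) {I A : Type} [Finite I] [LinearOrder I]
    (hmono : ∀ a b, S.tle a b → htF S a ≤ htF S b)
    (pm : A ⊕ (QCar S I × I) → A ⊕ QCar S I)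
    (hex : ∀ q : QCar S I, ∃ i, pm (Sum.inr (q, i)) = Sum.inr q)
    (s : α) : ∃ t, VeryGood S hmono pm ⟨s, t⟩ := by
  have main : ∀ n (s : α), htF S s = n → ∃ t, VeryGood S hmono pm ⟨s, t⟩ := by
    intro n
    induction n using Nat.strong_induction_on with
    | _ n ih =>
      intro s hs
      have hpos := htF_pos S s
      by_cases h1 : htF S s = 1
      · -- base case
        obtain ⟨i0, hi0, hmin0⟩ := exists_min (hex ⟨s, fun j => absurd j.2 (by omega)⟩)
        refine ⟨fun _ => i0, ?_⟩
        intro s' h'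
        have hs' : s' = s := htF_inj S h'
          (le_antisymm (hmono _ _ h') (by rw [h1]; exact htF_pos S s'))
        subst hs'
        have hq : toQ S ⟨s', restrictT S hmono h' (fun _ => i0)⟩ =
            (⟨s', fun j => absurd j.2 (by omega)⟩, i0) := by
          refine Prod.ext ?_ rfl
          show (⟨s', dropLastF S (restrictT S hmono h' (fun _ => i0))⟩ : QCar S I) = _
          exact congrArg (fun f => (⟨s', f⟩ : QCar S I))
            (funext fun j => absurd j.2 (by omega))
        rw [hq]
        exact ⟨hi0, fun i hlt => hmin0 i hlt⟩
      · -- step case: n ≥ 2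
        have hn2 : 2 ≤ n := by omega
        obtain ⟨s₀, ⟨h₀, ht₀⟩, hu₀⟩ := exists_unique_pred S s (n - 2) (by omega)
        have ht₀' : htF S s₀ = n - 1 := by omega
        obtain ⟨t₀, hVG₀⟩ := ih (n - 1) (by omega) s₀ ht₀'
        obtain ⟨i1, hi1, hmin1⟩ := exists_min
          (hex ⟨s, fun j => t₀ ⟨j.1, by have := j.2; omega⟩⟩)
        set t : Fin (htF S s) → I :=
          fun k => if hlt : k.1 < n - 1 then t₀ ⟨k.1, by omega⟩ else i1 with htdef
        refine ⟨t, ?_⟩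
        intro s' h'
        by_cases hss : s' = s
        · subst hss
          have hq : toQ S ⟨s', restrictT S hmono h' t⟩ =
              (⟨s', fun j => t₀ ⟨j.1, by have := j.2; omega⟩⟩, i1) := by
            refine Prod.ext ?_ ?_
            · show (⟨s', dropLastF S (restrictT S hmono h' t)⟩ : QCar S I) = _
              refine congrArg (fun f => (⟨s', f⟩ : QCar S I)) (funext fun j => ?_)
              have hj : j.1 < n - 1 := by have := j.2; omega
              show t ⟨j.1, _⟩ = t₀ ⟨j.1, _⟩
              simp only [htdef]
              rw [dif_pos hj]
            · show t _ = i1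
              simp only [htdef]
              exact dif_neg (by show ¬(htF S s' - 1 < n - 1); omega)
          rw [hq]
          exact ⟨hi1, fun i hlt => hmin1 i hlt⟩
        · have hle : htF S s' ≤ n - 1 := by
            have h2 : htF S s' ≤ htF S s := hmono _ _ h'
            have h3 : htF S s' ≠ n := fun he =>
              hss (htF_inj S (show S.tle s' s from h') (by omega))
            omega
          have h'' : S.tle s' s₀ := by
            rcases S.pred_chain s s' s₀ h' h₀ with h | h
            · exact h
            · have h4 : htF S s₀ ≤ htF S s' := hmono _ _ h
              have h5 : s₀ = s' := htF_inj S h (by omega)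
              rw [← h5]; exact S.tle_refl _
          have hres : restrictT S hmono h' t = restrictT S hmono h'' t₀ := by
            funext k
            have hk : k.1 < n - 1 := by have := k.2; omega
            show t ⟨k.1, _⟩ = t₀ ⟨k.1, _⟩
            simp only [htdef]
            rw [dif_pos hk]
          rw [hres]
          exact hVG₀ s' h''
  exact main (htF S s) s rfl
/-- For `p` with property (⁎) (`p ↾ A = id_A` and `(s,u) ∈ p[I(s,u)] ⊆ A ∪ {(s,u)}`),
each `s ∈ S` has exactly one `t = t_s` with `(s, t)` very good, and for `s₁ ⊑_S s₂`
one has `t_{s₁} = t_{s₂} ↾ ht(s₁)`. -/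
theorem stmt18 (I A : Type) [Finite I] [LinearOrder I] [Nonempty I]
    (S : OForest α) (hmono : ∀ a b, S.tle a b → htF S a ≤ htF S b)
    (pm : A ⊕ (QCar S I × I) → A ⊕ QCar S I)
    (hp1 : ∀ a : A, pm (Sum.inl a) = Sum.inl a)
    (hp2 : ∀ q : QCar S I,
      (∃ i : I, pm (Sum.inr (q, i)) = Sum.inr q) ∧
      (∀ i : I, pm (Sum.inr (q, i)) = Sum.inr q ∨
        ∃ a : A, pm (Sum.inr (q, i)) = Sum.inl a)) :
    (∀ s : α, ∃! t : Fin (htF S s) → I, VeryGood S hmono pm ⟨s, t⟩) ∧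
    (∀ (s₁ s₂ : α) (h : S.tle s₁ s₂) (t₁ : Fin (htF S s₁) → I)
      (t₂ : Fin (htF S s₂) → I), VeryGood S hmono pm ⟨s₁, t₁⟩ →
      VeryGood S hmono pm ⟨s₂, t₂⟩ →
      ∀ (k : Fin (htF S s₁)) (k' : Fin (htF S s₂)),
        (k : ℕ) = (k' : ℕ) → t₁ k = t₂ k') := by
  constructor
  · intro s
    obtain ⟨t, ht⟩ := vg_exists S hmono pm (fun q => (hp2 q).1) s
    exact ⟨t, ht, fun t' ht' => vg_uniq S hmono pm ht' ht⟩
  · intro s₁ s₂ h t₁ t₂ h₁ h₂ k k' hkk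
    have h₂' : VeryGood S hmono pm ⟨s₁, restrictT S hmono h t₂⟩ := by
      intro s' hs'
      exact h₂ s' (S.tle_trans _ _ _ hs' h)
    have heq := vg_uniq S hmono pm h₁ h₂'
    rw [heq]
    exact congrArg t₂ (Fin.ext hkk)
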